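/- Adequacy of the sequent calculus S_P for the three-valued logic P: a P-sequent Γ₁ | Γ₂ | Γ₃ is provable in S_P if and only if it is valid. -/
import Mathlib


/-- Truth values of the three-valued logic P: f < b < t. -/
inductive V3 : Type
  | f | b | t
deriving DecidableEq, Repr

namespace V3

/-- Negation: t, b, f ↦ f, b, t. -/
def negv : V3 → V3
  | .f => .t
  | .b => .b
  | .t => .f

/-- Conjunction: minimum with respect to f < b < t. -/
def conjv : V3 → V3 → V3
  | .f, _ => .f
  | _, .f => .f
  | .b, _ => .b
  | _, .b => .b
  | .t, .t => .t

/-- Implication: `x ⊃ y` is `y` if `x` is designated (b or t), and `t` otherwise. -/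
def impv : V3 → V3 → V3
  | .f, _ => .t
  | _, y => y

end V3

/-- Formulas of the three-valued logic P, with atoms indexed by ℕ, the constant
F, negation, conjunction, and implication. -/
inductive PForm : Type
  | atom : ℕ → PForm
  | fls : PForm
  | neg : PForm → PForm
  | conj : PForm → PForm → PForm
  | imp : PForm → PForm → PForm
deriving DecidableEq

namespace PForm

/-- The valuation of P extending an interpretation `I : ℕ → V3`. -/
def val (I : ℕ → V3) : PForm → V3
  | atom p => I p
  | fls => .f
  | neg φ => (φ.val I).negv
  | conj φ ψ => (φ.val I).conjv (ψ.val I)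
  | imp φ ψ => (φ.val I).impv (ψ.val I)

/-- `I` is a P-model of `φ`: `v_I(φ)` is designated, i.e. b or t. -/
def IsModel (I : ℕ → V3) (φ : PForm) : Prop := φ.val I = .b ∨ φ.val I = .t

/-- `I` is a P-model of the theory `Γ`. -/
def IsModelSet (I : ℕ → V3) (Γ : Set PForm) : Prop := ∀ φ ∈ Γ, IsModel I φ

end PForm

/-- A P-sequent `Γ₁ | Γ₂ | Γ₃` is true under `I` if some formula of `Γ₁` takes
value f, or some formula of `Γ₂` takes value b, or some formula of `Γ₃` takes
value t under `I`. -/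
def PSeqTrue (I : ℕ → V3) (Γ₁ Γ₂ Γ₃ : Finset PForm) : Prop :=
  (∃ φ ∈ Γ₁, φ.val I = .f) ∨ (∃ φ ∈ Γ₂, φ.val I = .b) ∨ (∃ φ ∈ Γ₃, φ.val I = .t)

/-- A P-sequent is valid if it is true under every interpretation. -/
def PSeqValid (Γ₁ Γ₂ Γ₃ : Finset PForm) : Prop := ∀ I, PSeqTrue I Γ₁ Γ₂ Γ₃

/-- The sequent calculus `S_P` for the three-valued logic P (components in the
order f | b | t). -/
inductive SP : Finset PForm → Finset PForm → Finset PForm → Prop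
  | ax (Γ Δ Ω : Finset PForm) (φ : PForm) :
      SP (insert φ Γ) (insert φ Δ) (insert φ Ω)
  | axF (Γ Δ Ω : Finset PForm) :
      SP (insert .fls Γ) Δ Ω
  | negF {Γ Δ Ω : Finset PForm} {φ : PForm} :
      SP Γ Δ (insert φ Ω) → SP (insert (.neg φ) Γ) Δ Ω
  | negB {Γ Δ Ω : Finset PForm} {φ : PForm} :
      SP Γ (insert φ Δ) Ω → SP Γ (insert (.neg φ) Δ) Ω
  | negT {Γ Δ Ω : Finset PForm} {φ : PForm} :
      SP (insert φ Γ) Δ Ω → SP Γ Δ (insert (.neg φ) Ω)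
  | conjF {Γ Δ Ω : Finset PForm} {φ ψ : PForm} :
      SP (insert φ (insert ψ Γ)) Δ Ω → SP (insert (.conj φ ψ) Γ) Δ Ω
  | conjB {Γ Δ Ω : Finset PForm} {φ ψ : PForm} :
      SP Γ (insert φ (insert ψ Δ)) Ω → SP Γ (insert φ Δ) (insert φ Ω) →
      SP Γ (insert ψ Δ) (insert ψ Ω) → SP Γ (insert (.conj φ ψ) Δ) Ω
  | conjT {Γ Δ Ω : Finset PForm} {φ ψ : PForm} :
      SP Γ Δ (insert φ Ω) → SP Γ Δ (insert ψ Ω) → SP Γ Δ (insert (.conj φ ψ) Ω)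
  | impF {Γ Δ Ω : Finset PForm} {φ ψ : PForm} :
      SP Γ (insert φ Δ) (insert φ Ω) → SP (insert ψ Γ) Δ Ω →
      SP (insert (.imp φ ψ) Γ) Δ Ω
  | impB {Γ Δ Ω : Finset PForm} {φ ψ : PForm} :
      SP Γ (insert φ Δ) (insert φ Ω) → SP Γ (insert ψ Δ) Ω →
      SP Γ (insert (.imp φ ψ) Δ) Ω
  | impT {Γ Δ Ω : Finset PForm} {φ ψ : PForm} :
      SP (insert φ Γ) Δ (insert ψ Ω) → SP Γ Δ (insert (.imp φ ψ) Ω)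
  | wF {Γ Δ Ω : Finset PForm} (φ : PForm) :
      SP Γ Δ Ω → SP (insert φ Γ) Δ Ω
  | wB {Γ Δ Ω : Finset PForm} (φ : PForm) :
      SP Γ Δ Ω → SP Γ (insert φ Δ) Ω
  | wT {Γ Δ Ω : Finset PForm} (φ : PForm) :
      SP Γ Δ Ω → SP Γ Δ (insert φ Ω)


set_option linter.unreachableTactic false
set_option linter.unusedTactic false

lemma sound {Γ Δ Ω : Finset PForm} (h : SP Γ Δ Ω) : PSeqValid Γ Δ Ω := by
  induction h with
  | ax Γ Δ Ω φ =>
    intro I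
    rcases hv : φ.val I with _|_|_
    · exact Or.inl ⟨φ, Finset.mem_insert_self _ _, hv⟩
    · exact Or.inr (Or.inl ⟨φ, Finset.mem_insert_self _ _, hv⟩)
    · exact Or.inr (Or.inr ⟨φ, Finset.mem_insert_self _ _, hv⟩)
  | axF Γ Δ Ω =>
    intro I; exact Or.inl ⟨.fls, Finset.mem_insert_self _ _, rfl⟩
  | @negF Γ Δ Ω φ h ih =>
    intro I; have j1 := ih I
    simp only [PSeqTrue, Finset.exists_mem_insert] at j1 ⊢
    cases hφ : φ.val I <;> simp_all [PForm.val, V3.negv] <;> tauto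
  | @negB Γ Δ Ω φ h ih =>
    intro I; have j1 := ih I
    simp only [PSeqTrue, Finset.exists_mem_insert] at j1 ⊢
    cases hφ : φ.val I <;> simp_all [PForm.val, V3.negv] <;> tauto
  | @negT Γ Δ Ω φ h ih =>
    intro I; have j1 := ih I
    simp only [PSeqTrue, Finset.exists_mem_insert] at j1 ⊢
    cases hφ : φ.val I <;> simp_all [PForm.val, V3.negv] <;> tauto
  | @conjF Γ Δ Ω φ ψ h ih =>
    intro I; have j1 := ih I
    simp only [PSeqTrue, Finset.exists_mem_insert] at j1 ⊢
    cases hφ : φ.val I <;> cases hψ : ψ.val I <;>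
      simp_all [PForm.val, V3.conjv] <;> tauto
  | @conjB Γ Δ Ω φ ψ h1 h2 h3 ih1 ih2 ih3 =>
    intro I; have j1 := ih1 I; have j2 := ih2 I; have j3 := ih3 I
    simp only [PSeqTrue, Finset.exists_mem_insert] at j1 j2 j3 ⊢
    cases hφ : φ.val I <;> cases hψ : ψ.val I <;>
      simp_all [PForm.val, V3.conjv] <;> tauto
  | @conjT Γ Δ Ω φ ψ h1 h2 ih1 ih2 =>
    intro I; have j1 := ih1 I; have j2 := ih2 I
    simp only [PSeqTrue, Finset.exists_mem_insert] at j1 j2 ⊢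
    cases hφ : φ.val I <;> cases hψ : ψ.val I <;>
      simp_all [PForm.val, V3.conjv] <;> tauto
  | @impF Γ Δ Ω φ ψ h1 h2 ih1 ih2 =>
    intro I; have j1 := ih1 I; have j2 := ih2 I
    simp only [PSeqTrue, Finset.exists_mem_insert] at j1 j2 ⊢
    cases hφ : φ.val I <;> cases hψ : ψ.val I <;>
      simp_all [PForm.val, V3.impv] <;> tauto
  | @impB Γ Δ Ω φ ψ h1 h2 ih1 ih2 =>
    intro I; have j1 := ih1 I; have j2 := ih2 I
    simp only [PSeqTrue, Finset.exists_mem_insert] at j1 j2 ⊢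
    cases hφ : φ.val I <;> cases hψ : ψ.val I <;>
      simp_all [PForm.val, V3.impv] <;> tauto
  | @impT Γ Δ Ω φ ψ h ih =>
    intro I; have j1 := ih I
    simp only [PSeqTrue, Finset.exists_mem_insert] at j1 ⊢
    cases hφ : φ.val I <;> cases hψ : ψ.val I <;>
      simp_all [PForm.val, V3.impv] <;> tauto
  | wF φ h ih =>
    intro I
    rcases ih I with ⟨ψ, hm, hv⟩ | ⟨ψ, hm, hv⟩ | ⟨ψ, hm, hv⟩
    · exact Or.inl ⟨ψ, Finset.mem_insert_of_mem hm, hv⟩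
    · exact Or.inr (Or.inl ⟨ψ, hm, hv⟩)
    · exact Or.inr (Or.inr ⟨ψ, hm, hv⟩)
  | wB φ h ih =>
    intro I
    rcases ih I with ⟨ψ, hm, hv⟩ | ⟨ψ, hm, hv⟩ | ⟨ψ, hm, hv⟩
    · exact Or.inl ⟨ψ, hm, hv⟩
    · exact Or.inr (Or.inl ⟨ψ, Finset.mem_insert_of_mem hm, hv⟩)
    · exact Or.inr (Or.inr ⟨ψ, hm, hv⟩)
  | wT φ h ih =>
    intro I
    rcases ih I with ⟨ψ, hm, hv⟩ | ⟨ψ, hm, hv⟩ | ⟨ψ, hm, hv⟩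
    · exact Or.inl ⟨ψ, hm, hv⟩
    · exact Or.inr (Or.inl ⟨ψ, hm, hv⟩)
    · exact Or.inr (Or.inr ⟨ψ, Finset.mem_insert_of_mem hm, hv⟩)

def deg : PForm → ℕ
  | .atom _ => 0
  | .fls => 0
  | .neg φ => deg φ + 1
  | .conj φ ψ => 2 * deg φ + 2 * deg ψ + 1
  | .imp φ ψ => 2 * deg φ + deg ψ + 1

def msr (Γ : Finset PForm) : ℕ := ∑ φ ∈ Γ, deg φ

lemma msr_erase_add {φ : PForm} {Γ : Finset PForm} (h : φ ∈ Γ) :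
    msr (Γ.erase φ) + deg φ = msr Γ := Finset.sum_erase_add Γ deg h

lemma msr_insert_le (φ : PForm) (Γ : Finset PForm) :
    msr (insert φ Γ) ≤ deg φ + msr Γ := by
  by_cases h : φ ∈ Γ
  · rw [Finset.insert_eq_self.2 h]; omega
  · rw [msr, Finset.sum_insert h]; rfl

-- Invertibility lemmas
lemma inv_negF {Γ Δ Ω : Finset PForm} {φ : PForm}
    (h : PSeqValid (insert (.neg φ) Γ) Δ Ω) : PSeqValid Γ Δ (insert φ Ω) := by
  intro I; have j := h I
  simp only [PSeqTrue, Finset.exists_mem_insert] at j ⊢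
  cases hφ : φ.val I <;> simp_all [PForm.val, V3.negv] <;> tauto

lemma inv_negB {Γ Δ Ω : Finset PForm} {φ : PForm}
    (h : PSeqValid Γ (insert (.neg φ) Δ) Ω) : PSeqValid Γ (insert φ Δ) Ω := by
  intro I; have j := h I
  simp only [PSeqTrue, Finset.exists_mem_insert] at j ⊢
  cases hφ : φ.val I <;> simp_all [PForm.val, V3.negv] <;> tauto

lemma inv_negT {Γ Δ Ω : Finset PForm} {φ : PForm}
    (h : PSeqValid Γ Δ (insert (.neg φ) Ω)) : PSeqValid (insert φ Γ) Δ Ω := by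
  intro I; have j := h I
  simp only [PSeqTrue, Finset.exists_mem_insert] at j ⊢
  cases hφ : φ.val I <;> simp_all [PForm.val, V3.negv] <;> tauto

lemma inv_conjF {Γ Δ Ω : Finset PForm} {φ ψ : PForm}
    (h : PSeqValid (insert (.conj φ ψ) Γ) Δ Ω) :
    PSeqValid (insert φ (insert ψ Γ)) Δ Ω := by
  intro I; have j := h I
  simp only [PSeqTrue, Finset.exists_mem_insert] at j ⊢
  cases hφ : φ.val I <;> cases hψ : ψ.val I <;>
    simp_all [PForm.val, V3.conjv] <;> tauto

lemma inv_conjB1 {Γ Δ Ω : Finset PForm} {φ ψ : PForm}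
    (h : PSeqValid Γ (insert (.conj φ ψ) Δ) Ω) :
    PSeqValid Γ (insert φ (insert ψ Δ)) Ω := by
  intro I; have j := h I
  simp only [PSeqTrue, Finset.exists_mem_insert] at j ⊢
  cases hφ : φ.val I <;> cases hψ : ψ.val I <;>
    simp_all [PForm.val, V3.conjv] <;> tauto

lemma inv_conjB2 {Γ Δ Ω : Finset PForm} {φ ψ : PForm}
    (h : PSeqValid Γ (insert (.conj φ ψ) Δ) Ω) :
    PSeqValid Γ (insert φ Δ) (insert φ Ω) := by
  intro I; have j := h I
  simp only [PSeqTrue, Finset.exists_mem_insert] at j ⊢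
  cases hφ : φ.val I <;> cases hψ : ψ.val I <;>
    simp_all [PForm.val, V3.conjv] <;> tauto

lemma inv_conjB3 {Γ Δ Ω : Finset PForm} {φ ψ : PForm}
    (h : PSeqValid Γ (insert (.conj φ ψ) Δ) Ω) :
    PSeqValid Γ (insert ψ Δ) (insert ψ Ω) := by
  intro I; have j := h I
  simp only [PSeqTrue, Finset.exists_mem_insert] at j ⊢
  cases hφ : φ.val I <;> cases hψ : ψ.val I <;>
    simp_all [PForm.val, V3.conjv] <;> tauto

lemma inv_conjT1 {Γ Δ Ω : Finset PForm} {φ ψ : PForm}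
    (h : PSeqValid Γ Δ (insert (.conj φ ψ) Ω)) :
    PSeqValid Γ Δ (insert φ Ω) := by
  intro I; have j := h I
  simp only [PSeqTrue, Finset.exists_mem_insert] at j ⊢
  cases hφ : φ.val I <;> cases hψ : ψ.val I <;>
    simp_all [PForm.val, V3.conjv] <;> tauto

lemma inv_conjT2 {Γ Δ Ω : Finset PForm} {φ ψ : PForm}
    (h : PSeqValid Γ Δ (insert (.conj φ ψ) Ω)) :
    PSeqValid Γ Δ (insert ψ Ω) := by
  intro I; have j := h I
  simp only [PSeqTrue, Finset.exists_mem_insert] at j ⊢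
  cases hφ : φ.val I <;> cases hψ : ψ.val I <;>
    simp_all [PForm.val, V3.conjv] <;> tauto

lemma inv_impF1 {Γ Δ Ω : Finset PForm} {φ ψ : PForm}
    (h : PSeqValid (insert (.imp φ ψ) Γ) Δ Ω) :
    PSeqValid Γ (insert φ Δ) (insert φ Ω) := by
  intro I; have j := h I
  simp only [PSeqTrue, Finset.exists_mem_insert] at j ⊢
  cases hφ : φ.val I <;> cases hψ : ψ.val I <;>
    simp_all [PForm.val, V3.impv] <;> tauto

lemma inv_impF2 {Γ Δ Ω : Finset PForm} {φ ψ : PForm}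
    (h : PSeqValid (insert (.imp φ ψ) Γ) Δ Ω) :
    PSeqValid (insert ψ Γ) Δ Ω := by
  intro I; have j := h I
  simp only [PSeqTrue, Finset.exists_mem_insert] at j ⊢
  cases hφ : φ.val I <;> cases hψ : ψ.val I <;>
    simp_all [PForm.val, V3.impv] <;> tauto

lemma inv_impB1 {Γ Δ Ω : Finset PForm} {φ ψ : PForm}
    (h : PSeqValid Γ (insert (.imp φ ψ) Δ) Ω) :
    PSeqValid Γ (insert φ Δ) (insert φ Ω) := by
  intro I; have j := h I
  simp only [PSeqTrue, Finset.exists_mem_insert] at j ⊢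
  cases hφ : φ.val I <;> cases hψ : ψ.val I <;>
    simp_all [PForm.val, V3.impv] <;> tauto

lemma inv_impB2 {Γ Δ Ω : Finset PForm} {φ ψ : PForm}
    (h : PSeqValid Γ (insert (.imp φ ψ) Δ) Ω) :
    PSeqValid Γ (insert ψ Δ) Ω := by
  intro I; have j := h I
  simp only [PSeqTrue, Finset.exists_mem_insert] at j ⊢
  cases hφ : φ.val I <;> cases hψ : ψ.val I <;>
    simp_all [PForm.val, V3.impv] <;> tauto

lemma inv_impT {Γ Δ Ω : Finset PForm} {φ ψ : PForm}
    (h : PSeqValid Γ Δ (insert (.imp φ ψ) Ω)) :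
    PSeqValid (insert φ Γ) Δ (insert ψ Ω) := by
  intro I; have j := h I
  simp only [PSeqTrue, Finset.exists_mem_insert] at j ⊢
  cases hφ : φ.val I <;> cases hψ : ψ.val I <;>
    simp_all [PForm.val, V3.impv] <;> tauto

lemma base_case {Γ₁ Γ₂ Γ₃ : Finset PForm}
    (h1 : ∀ φ ∈ Γ₁, deg φ = 0) (h2 : ∀ φ ∈ Γ₂, deg φ = 0)
    (h3 : ∀ φ ∈ Γ₃, deg φ = 0) (hv : PSeqValid Γ₁ Γ₂ Γ₃) :
    SP Γ₁ Γ₂ Γ₃ := by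
  by_cases hF : (.fls : PForm) ∈ Γ₁
  · rw [← Finset.insert_erase hF]; exact SP.axF _ _ _
  by_cases hA : ∃ n : ℕ, (.atom n : PForm) ∈ Γ₁ ∧ (.atom n : PForm) ∈ Γ₂ ∧
      (.atom n : PForm) ∈ Γ₃
  · obtain ⟨n, m1, m2, m3⟩ := hA
    rw [← Finset.insert_erase m1, ← Finset.insert_erase m2, ← Finset.insert_erase m3]
    exact SP.ax _ _ _ _
  · exfalso
    push_neg at hA
    set I : ℕ → V3 := fun n =>
      if (.atom n : PForm) ∈ Γ₂ then (if (.atom n : PForm) ∈ Γ₃ then .f else .t)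
      else (if (.atom n : PForm) ∈ Γ₃ then .b else .t) with hI
    rcases hv I with ⟨φ, hm, hval⟩ | ⟨φ, hm, hval⟩ | ⟨φ, hm, hval⟩
    · cases φ with
      | atom n =>
        have := hA n hm
        simp only [PForm.val, hI] at hval
        split_ifs at hval with a b c <;> simp_all
      | fls => exact hF hm
      | neg φ => simpa [deg] using h1 _ hm
      | conj φ ψ => simpa [deg] using h1 _ hm
      | imp φ ψ => simpa [deg] using h1 _ hm
    · cases φ with
      | atom n =>
        simp only [PForm.val, hI] at hval
        split_ifs at hval <;> simp_all
      | fls => simp [PForm.val] at hval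
      | neg φ => simpa [deg] using h2 _ hm
      | conj φ ψ => simpa [deg] using h2 _ hm
      | imp φ ψ => simpa [deg] using h2 _ hm
    · cases φ with
      | atom n =>
        simp only [PForm.val, hI] at hval
        split_ifs at hval <;> simp_all
      | fls => simp [PForm.val] at hval
      | neg φ => simpa [deg] using h3 _ hm
      | conj φ ψ => simpa [deg] using h3 _ hm
      | imp φ ψ => simpa [deg] using h3 _ hm

lemma complete : ∀ n (Γ₁ Γ₂ Γ₃ : Finset PForm),
    msr Γ₁ + msr Γ₂ + msr Γ₃ ≤ n → PSeqValid Γ₁ Γ₂ Γ₃ → SP Γ₁ Γ₂ Γ₃ := by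
  intro n
  induction n with
  | zero =>
    intro Γ₁ Γ₂ Γ₃ hm hv
    have e1 : msr Γ₁ = 0 := by omega
    have e2 : msr Γ₂ = 0 := by omega
    have e3 : msr Γ₃ = 0 := by omega
    exact base_case (Finset.sum_eq_zero_iff.1 e1) (Finset.sum_eq_zero_iff.1 e2)
      (Finset.sum_eq_zero_iff.1 e3) hv
  | succ n ih =>
    intro Γ₁ Γ₂ Γ₃ hm hv
    by_cases hc : (∃ φ ∈ Γ₁, 0 < deg φ) ∨ (∃ φ ∈ Γ₂, 0 < deg φ) ∨ (∃ φ ∈ Γ₃, 0 < deg φ)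
    · rcases hc with ⟨φ, hφm, hd⟩ | ⟨φ, hφm, hd⟩ | ⟨φ, hφm, hd⟩
      -- principal formula in Γ₁
      · have hme := msr_erase_add hφm
        cases φ with
        | atom n => simp [deg] at hd
        | fls => simp [deg] at hd
        | neg φ =>
          rw [← Finset.insert_erase hφm] at hv ⊢
          refine SP.negF (ih _ _ _ ?_ (inv_negF hv))
          have := msr_insert_le φ Γ₃
          simp only [deg] at hme; omega
        | conj φ ψ =>
          rw [← Finset.insert_erase hφm] at hv ⊢
          refine SP.conjF (ih _ _ _ ?_ (inv_conjF hv))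
          have i1 := msr_insert_le ψ (Γ₁.erase (.conj φ ψ))
          have i2 := msr_insert_le φ (insert ψ (Γ₁.erase (.conj φ ψ)))
          simp only [deg] at hme; omega
        | imp φ ψ =>
          rw [← Finset.insert_erase hφm] at hv ⊢
          refine SP.impF (ih _ _ _ ?_ (inv_impF1 hv)) (ih _ _ _ ?_ (inv_impF2 hv))
          · have i1 := msr_insert_le φ Γ₂
            have i2 := msr_insert_le φ Γ₃
            simp only [deg] at hme; omega
          · have i1 := msr_insert_le ψ (Γ₁.erase (.imp φ ψ))
            simp only [deg] at hme; omega
      -- principal formula in Γ₂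
      · have hme := msr_erase_add hφm
        cases φ with
        | atom n => simp [deg] at hd
        | fls => simp [deg] at hd
        | neg φ =>
          rw [← Finset.insert_erase hφm] at hv ⊢
          refine SP.negB (ih _ _ _ ?_ (inv_negB hv))
          have := msr_insert_le φ (Γ₂.erase (.neg φ))
          simp only [deg] at hme; omega
        | conj φ ψ =>
          rw [← Finset.insert_erase hφm] at hv ⊢
          refine SP.conjB (ih _ _ _ ?_ (inv_conjB1 hv)) (ih _ _ _ ?_ (inv_conjB2 hv))
            (ih _ _ _ ?_ (inv_conjB3 hv))
          · have i1 := msr_insert_le ψ (Γ₂.erase (.conj φ ψ))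
            have i2 := msr_insert_le φ (insert ψ (Γ₂.erase (.conj φ ψ)))
            simp only [deg] at hme; omega
          · have i1 := msr_insert_le φ (Γ₂.erase (.conj φ ψ))
            have i2 := msr_insert_le φ Γ₃
            simp only [deg] at hme; omega
          · have i1 := msr_insert_le ψ (Γ₂.erase (.conj φ ψ))
            have i2 := msr_insert_le ψ Γ₃
            simp only [deg] at hme; omega
        | imp φ ψ =>
          rw [← Finset.insert_erase hφm] at hv ⊢
          refine SP.impB (ih _ _ _ ?_ (inv_impB1 hv)) (ih _ _ _ ?_ (inv_impB2 hv))
          · have i1 := msr_insert_le φ (Γ₂.erase (.imp φ ψ))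
            have i2 := msr_insert_le φ Γ₃
            simp only [deg] at hme; omega
          · have i1 := msr_insert_le ψ (Γ₂.erase (.imp φ ψ))
            simp only [deg] at hme; omega
      -- principal formula in Γ₃
      · have hme := msr_erase_add hφm
        cases φ with
        | atom n => simp [deg] at hd
        | fls => simp [deg] at hd
        | neg φ =>
          rw [← Finset.insert_erase hφm] at hv ⊢
          refine SP.negT (ih _ _ _ ?_ (inv_negT hv))
          have := msr_insert_le φ Γ₁
          simp only [deg] at hme; omega
        | conj φ ψ =>
          rw [← Finset.insert_erase hφm] at hv ⊢
          refine SP.conjT (ih _ _ _ ?_ (inv_conjT1 hv)) (ih _ _ _ ?_ (inv_conjT2 hv))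
          · have i1 := msr_insert_le φ (Γ₃.erase (.conj φ ψ))
            simp only [deg] at hme; omega
          · have i1 := msr_insert_le ψ (Γ₃.erase (.conj φ ψ))
            simp only [deg] at hme; omega
        | imp φ ψ =>
          rw [← Finset.insert_erase hφm] at hv ⊢
          refine SP.impT (ih _ _ _ ?_ (inv_impT hv))
          have i1 := msr_insert_le φ Γ₁
          have i2 := msr_insert_le ψ (Γ₃.erase (.imp φ ψ))
          simp only [deg] at hme; omega
    · push_neg at hc
      exact base_case (fun φ h => by have := hc.1 φ h; omega)
        (fun φ h => by have := hc.2.1 φ h; omega)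
        (fun φ h => by have := hc.2.2 φ h; omega) hv


/-- Adequacy of the sequent calculus `S_P`: a P-sequent `Γ₁ | Γ₂ | Γ₃` is
provable in `S_P` iff it is valid. -/
theorem SP_adequate (Γ₁ Γ₂ Γ₃ : Finset PForm) :
    SP Γ₁ Γ₂ Γ₃ ↔ PSeqValid Γ₁ Γ₂ Γ₃ := by
  exact ⟨sound, complete _ Γ₁ Γ₂ Γ₃ le_rfl⟩
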